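/- Let Γ be an uncountable set and let Γ = Γ₁ ∪ Γ₂ be a partition of Γ into two uncountable sets. Let A_i = {f ∈ ℓ∞^c(Γ) : 0 ≤ f(γ) ≤ 1 for all γ, and the support of f is contained in Γ_i}. Then the set A₁ ∪ (−A₂) ⊆ ℓ∞^c(Γ) has diameter 1 and radius 1; consequently the Jung constant satisfies J(ℓ∞^c(Γ)) = 2. -/

import Mathlib

/-- `ℓ∞^c(Γ)`: the subspace of `ℓ∞(Γ)` consisting of the bounded functions
`Γ → ℝ` with countable support. -/
noncomputable def linftyC (Γ : Type) : Submodule ℝ (lp (fun _ : Γ => ℝ) ⊤) where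
  carrier := {f | (Function.support (⇑f)).Countable}
  add_mem' := by
    intro f g hf hg
    refine Set.Countable.mono ?_ (hf.union hg)
    rw [lp.coeFn_add]
    exact Function.support_add _ _
  zero_mem' := by
    have h0 : ⇑(0 : lp (fun _ : Γ => ℝ) ⊤) = (0 : ∀ _ : Γ, ℝ) := lp.coeFn_zero _ _
    have : (Function.support (⇑(0 : lp (fun _ : Γ => ℝ) ⊤))).Countable := by
      rw [h0, Function.support_zero]; exact Set.countable_empty
    exact this
  smul_mem' := by
    intro c f hf
    refine Set.Countable.mono ?_ hf
    rw [lp.coeFn_smul]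
    exact Function.support_smul_subset_right _ _

/-- The (Chebyshev) radius of a subset of a normed space:
`r(A) = inf_{b ∈ X} sup_{a ∈ A} ‖a − b‖`. -/
noncomputable def radius {X : Type} [SeminormedAddCommGroup X] (A : Set X) : ℝ :=
  ⨅ b : X, ⨆ a : A, ‖(a : X) - b‖

/-- The Jung constant `J(X) = sup {2 r(A)/δ(A) : A closed bounded, δ(A) > 0}`. -/
noncomputable def Jung (X : Type) [SeminormedAddCommGroup X] : ℝ :=
  sSup {c : ℝ | ∃ A : Set X, IsClosed A ∧ Bornology.IsBounded A ∧
    0 < Metric.diam A ∧ c = 2 * radius A / Metric.diam A}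


section AuxRadius

variable {X : Type} [SeminormedAddCommGroup X]

lemma radius_bddBelow (A : Set X) :
    BddBelow (Set.range fun b : X => ⨆ a : A, ‖(a : X) - b‖) := by
  refine ⟨0, ?_⟩
  rintro x ⟨b, rfl⟩
  exact Real.iSup_nonneg fun a => norm_nonneg _

lemma radius_le_diam {A : Set X} (hb : Bornology.IsBounded A) (hne : A.Nonempty) :
    radius A ≤ Metric.diam A := by
  obtain ⟨a₀, ha₀⟩ := hne
  refine le_trans (ciInf_le (radius_bddBelow A) a₀) ?_
  refine Real.iSup_le (fun a => ?_) Metric.diam_nonneg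
  rw [← dist_eq_norm]
  exact Metric.dist_le_diam_of_mem hb a.2 ha₀

end AuxRadius

set_option maxHeartbeats 4000000 in
set_option synthInstance.maxHeartbeats 400000 in
/-- For an uncountable `Γ` split into two uncountable pieces `Γ₁ ∪ Γ₂`, the set
`A₁ ∪ (−A₂)` of `[0,1]`-valued countably supported functions supported in `Γ₁`
(resp. negatives of those supported in `Γ₂`) has diameter 1 and radius 1 in
`ℓ∞^c(Γ)`; consequently `J(ℓ∞^c(Γ)) = 2`. -/
theorem jung_linftyC_eq_two
    (Γ : Type) (hΓ : ¬ (Set.univ : Set Γ).Countable)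
    (Γ₁ Γ₂ : Set Γ) (hunion : Γ₁ ∪ Γ₂ = Set.univ) (hdisj : Γ₁ ∩ Γ₂ = ∅)
    (h₁ : ¬ Γ₁.Countable) (h₂ : ¬ Γ₂.Countable)
    (A : Fin 2 → Set ↥(linftyC Γ))
    (hA : ∀ i : Fin 2, A i = {f : ↥(linftyC Γ) |
      (∀ γ : Γ, 0 ≤ (f : lp (fun _ : Γ => ℝ) ⊤) γ ∧ (f : lp (fun _ : Γ => ℝ) ⊤) γ ≤ 1) ∧
      Function.support (⇑(f : lp (fun _ : Γ => ℝ) ⊤)) ⊆ (if i = 0 then Γ₁ else Γ₂)}) :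
    Metric.diam (A 0 ∪ -(A 1)) = 1 ∧ radius (A 0 ∪ -(A 1)) = 1 ∧
      Jung ↥(linftyC Γ) = 2 := by
  classical
  haveI : Nonempty ↥(linftyC Γ) := ⟨0⟩
  set S : Set ↥(linftyC Γ) := A 0 ∪ -(A 1) with hSdef
  -- basic eval API
  have happly_le : ∀ (f : lp (fun _ : Γ => ℝ) ⊤) (γ : Γ), |f γ| ≤ ‖f‖ := by
    intro f γ
    have h := lp.norm_apply_le_norm (E := fun _ : Γ => ℝ) ENNReal.top_ne_zero f γ
    rwa [Real.norm_eq_abs] at h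
  have hnorm_le : ∀ (f : lp (fun _ : Γ => ℝ) ⊤) (C : ℝ), 0 ≤ C → (∀ γ, |f γ| ≤ C) → ‖f‖ ≤ C := by
    intro f C hC h
    exact lp.norm_le_of_forall_le hC (fun γ => by rw [Real.norm_eq_abs]; exact h γ)
  -- the indicator elements
  have hmem1 : ∀ γ₀ : Γ, Memℓp (Pi.single γ₀ 1 : ∀ _ : Γ, ℝ) ⊤ := by
    intro γ₀
    refine memℓp_infty ⟨1, ?_⟩
    rintro x ⟨γ, rfl⟩
    show ‖(Pi.single γ₀ 1 : ∀ _ : Γ, ℝ) γ‖ ≤ 1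
    rw [Real.norm_eq_abs, Pi.single_apply]
    split_ifs <;> norm_num
  have hsupp1 : ∀ γ₀ : Γ, Function.support (Pi.single γ₀ 1 : ∀ _ : Γ, ℝ) ⊆ {γ₀} := by
    intro γ₀ γ hγ
    simp only [Set.mem_singleton_iff]
    by_contra h
    exact hγ (by rw [Pi.single_apply, if_neg h])
  set e : Γ → ↥(linftyC Γ) := fun γ₀ =>
    ⟨⟨Pi.single γ₀ 1, hmem1 γ₀⟩,
      Set.Countable.mono (hsupp1 γ₀) (Set.countable_singleton γ₀)⟩ with hedef
  have heval : ∀ γ₀ γ : Γ, ((e γ₀ : lp (fun _ : Γ => ℝ) ⊤) : ∀ _ : Γ, ℝ) γ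
      = if γ = γ₀ then 1 else 0 := by
    intro γ₀ γ
    simp [hedef, Pi.single_apply]
  have hnorme : ∀ γ₀ : Γ, ‖(e γ₀ : lp (fun _ : Γ => ℝ) ⊤)‖ = 1 := by
    intro γ₀
    refine le_antisymm (hnorm_le _ 1 zero_le_one fun γ => ?_) ?_
    · rw [heval]; split_ifs <;> norm_num
    · have := happly_le (e γ₀ : lp (fun _ : Γ => ℝ) ⊤) γ₀
      rw [heval, if_pos rfl, abs_one] at this
      exact this
  have heA : ∀ γ₀ ∈ Γ₁, e γ₀ ∈ A 0 := by
    intro γ₀ hγ₀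
    rw [hA 0]
    refine ⟨fun γ => ?_, ?_⟩
    · rw [heval]; split_ifs <;> norm_num
    · simp only [if_pos rfl]
      intro γ hγ
      have hne : γ = γ₀ := by
        by_contra h
        exact hγ (by rw [heval, if_neg h])
      rwa [hne]
  have h0A : (0 : ↥(linftyC Γ)) ∈ A 0 := by
    rw [hA 0]
    constructor
    · intro γ; norm_num
    · intro γ hγ; exact (Function.mem_support.1 hγ rfl).elim
  -- key pointwise property of elements of S
  have hprop : ∀ f ∈ S, ∀ γ : Γ,
      ((-1 : ℝ) ≤ (f : lp (fun _ : Γ => ℝ) ⊤) γ ∧ (f : lp (fun _ : Γ => ℝ) ⊤) γ ≤ 1) ∧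
      (0 < (f : lp (fun _ : Γ => ℝ) ⊤) γ → γ ∈ Γ₁) ∧
      ((f : lp (fun _ : Γ => ℝ) ⊤) γ < 0 → γ ∈ Γ₂) := by
    rintro f (hf | hf) γ
    · rw [hA 0] at hf
      obtain ⟨hv, hsupp⟩ := hf
      simp only [if_pos rfl] at hsupp
      refine ⟨⟨le_trans (by norm_num) (hv γ).1, (hv γ).2⟩, fun h => ?_, fun h => ?_⟩
      · exact hsupp (Function.mem_support.2 (ne_of_gt h))
      · exact absurd (hv γ).1 (not_le.2 h)
    · rw [Set.mem_neg, hA 1] at hf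
      obtain ⟨hv, hsupp⟩ := hf
      have hcoe : ((((-f : ↥(linftyC Γ)) : lp (fun _ : Γ => ℝ) ⊤)) : ∀ _ : Γ, ℝ)
          = fun γ => -((f : lp (fun _ : Γ => ℝ) ⊤) γ) := by
        ext γ; simp
      simp only [Fin.isValue, if_neg (by norm_num : (1 : Fin 2) ≠ 0)] at hsupp
      rw [hcoe] at hv hsupp
      have hv' : ∀ δ : Γ, 0 ≤ -((f : lp (fun _ : Γ => ℝ) ⊤) δ) ∧
          -((f : lp (fun _ : Γ => ℝ) ⊤) δ) ≤ 1 := hv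
      refine ⟨⟨by linarith [(hv' γ).2], by linarith [(hv' γ).1]⟩, fun h => ?_, fun h => ?_⟩
      · exact absurd (hv' γ).1 (by simp only [le_neg, neg_zero, not_le]; exact h)
      · refine hsupp (Function.mem_support.2 ?_)
        show -((f : lp (fun _ : Γ => ℝ) ⊤) γ) ≠ 0
        exact ne_of_gt (by linarith)
  -- pointwise bound on differences
  have hdiff : ∀ f ∈ S, ∀ g ∈ S, ∀ γ : Γ,
      |(f : lp (fun _ : Γ => ℝ) ⊤) γ - (g : lp (fun _ : Γ => ℝ) ⊤) γ| ≤ 1 := by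
    intro f hf g hg γ
    obtain ⟨⟨hf1, hf2⟩, hfp, hfn⟩ := hprop f hf γ
    obtain ⟨⟨hg1, hg2⟩, hgp, hgn⟩ := hprop g hg γ
    have hγ₁₂ : ¬(γ ∈ Γ₁ ∧ γ ∈ Γ₂) := by
      rintro ⟨h1, h2⟩
      have : γ ∈ Γ₁ ∩ Γ₂ := ⟨h1, h2⟩
      rw [hdisj] at this
      exact this
    rw [abs_le]
    by_cases hfz : 0 < (f : lp (fun _ : Γ => ℝ) ⊤) γ
    · have hgnn : 0 ≤ (g : lp (fun _ : Γ => ℝ) ⊤) γ := by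
        by_contra h
        exact hγ₁₂ ⟨hfp hfz, hgn (lt_of_not_ge h)⟩
      constructor <;> linarith
    · by_cases hgz : 0 < (g : lp (fun _ : Γ => ℝ) ⊤) γ
      · have hfnn : 0 ≤ (f : lp (fun _ : Γ => ℝ) ⊤) γ := by
          by_contra h
          exact hγ₁₂ ⟨hgp hgz, hfn (lt_of_not_ge h)⟩
        constructor <;> linarith
      · push_neg at hfz hgz
        constructor <;> linarith
  -- norm bound on differences
  have hsub : ∀ f ∈ S, ∀ g ∈ S, ‖f - g‖ ≤ 1 := by
    intro f hf g hg
    have hc : ‖f - g‖ = ‖(f : lp (fun _ : Γ => ℝ) ⊤) - (g : lp (fun _ : Γ => ℝ) ⊤)‖ := by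
      rfl
    rw [hc]
    refine hnorm_le _ 1 zero_le_one fun γ => ?_
    have : ((f : lp (fun _ : Γ => ℝ) ⊤) - (g : lp (fun _ : Γ => ℝ) ⊤)) γ
        = (f : lp (fun _ : Γ => ℝ) ⊤) γ - (g : lp (fun _ : Γ => ℝ) ⊤) γ := rfl
    rw [this]
    exact hdiff f hf g hg γ
  have h0S : (0 : ↥(linftyC Γ)) ∈ S := Or.inl h0A
  have hnorm1 : ∀ f ∈ S, ‖f‖ ≤ 1 := by
    intro f hf
    have h := hsub f hf 0 h0S
    rwa [sub_zero] at h
  have hbdd : Bornology.IsBounded S := by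
    refine (Metric.isBounded_closedBall (x := (0 : ↥(linftyC Γ))) (r := 1)).subset fun f hf => ?_
    rw [Metric.mem_closedBall, dist_zero_right]
    exact hnorm1 f hf
  -- Γ₁ is nonempty
  have hΓ₁ne : Γ₁.Nonempty := by
    rw [Set.nonempty_iff_ne_empty]
    intro h
    exact h₁ (h ▸ Set.countable_empty)
  obtain ⟨γ₁, hγ₁⟩ := hΓ₁ne
  -- norm in the subtype
  have hnorme' : ∀ γ₀ : Γ, ‖e γ₀‖ = 1 := fun γ₀ => hnorme γ₀
  -- diameter = 1
  have hdiam : Metric.diam S = 1 := by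
    refine le_antisymm ?_ ?_
    · exact Metric.diam_le_of_forall_dist_le zero_le_one fun f hf g hg => by
        rw [dist_eq_norm]; exact hsub f hf g hg
    · have h1 : (1 : ℝ) = dist (e γ₁) (0 : ↥(linftyC Γ)) := by
        rw [dist_zero_right, hnorme' γ₁]
      rw [h1]
      exact Metric.dist_le_diam_of_mem hbdd (Or.inl (heA γ₁ hγ₁)) h0S
  -- radius = 1
  have hrad : radius S = 1 := by
    refine le_antisymm ?_ ?_
    · refine le_trans (ciInf_le (radius_bddBelow S) 0) ?_
      refine Real.iSup_le (fun a => ?_) zero_le_one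
      rw [sub_zero]
      exact hnorm1 a a.2
    · refine le_ciInf fun b => ?_
      -- find a point of Γ₁ outside the support of b
      have hbc : (Function.support (⇑(b : lp (fun _ : Γ => ℝ) ⊤))).Countable := b.2
      have hns : ¬ Γ₁ ⊆ Function.support (⇑(b : lp (fun _ : Γ => ℝ) ⊤)) := by
        intro h
        exact h₁ (Set.Countable.mono h hbc)
      obtain ⟨γ₀, hγ₀Γ, hγ₀s⟩ := Set.not_subset.1 hns
      have hb0 : (b : lp (fun _ : Γ => ℝ) ⊤) γ₀ = 0 := Function.notMem_support.1 hγ₀s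
      have hmemS : e γ₀ ∈ S := Or.inl (heA γ₀ hγ₀Γ)
      have hval : ((e γ₀ - b : ↥(linftyC Γ)) : lp (fun _ : Γ => ℝ) ⊤) γ₀ = 1 := by
        have : ((e γ₀ - b : ↥(linftyC Γ)) : lp (fun _ : Γ => ℝ) ⊤) γ₀
            = ((e γ₀ : lp (fun _ : Γ => ℝ) ⊤) γ₀) - ((b : lp (fun _ : Γ => ℝ) ⊤) γ₀) := rfl
        rw [this, heval, hb0]
        simp
      have h1le : (1 : ℝ) ≤ ‖e γ₀ - b‖ := by
        have := happly_le ((e γ₀ - b : ↥(linftyC Γ)) : lp (fun _ : Γ => ℝ) ⊤) γ₀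
        rwa [hval, abs_one, ← Submodule.coe_norm] at this
      have hBdd : BddAbove (Set.range fun a : S => ‖(a : ↥(linftyC Γ)) - b‖) := by
        refine ⟨1 + ‖b‖, ?_⟩
        rintro x ⟨a, rfl⟩
        exact le_trans (norm_sub_le _ _) (add_le_add_left (hnorm1 a a.2) _)
      exact le_ciSup_of_le hBdd ⟨e γ₀, hmemS⟩ h1le
  -- closedness
  have hev : ∀ γ : Γ, Continuous fun f : ↥(linftyC Γ) => (f : lp (fun _ : Γ => ℝ) ⊤) γ := by
    intro γ
    refine (LipschitzWith.of_dist_le_mul (K := 1) fun f g => ?_).continuous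
    rw [NNReal.coe_one, one_mul, Real.dist_eq, dist_eq_norm, Submodule.coe_norm]
    exact happly_le ((f - g : ↥(linftyC Γ)) : lp (fun _ : Γ => ℝ) ⊤) γ
  have hclosed0 : ∀ T : Set Γ, IsClosed {f : ↥(linftyC Γ) |
      (∀ γ : Γ, 0 ≤ (f : lp (fun _ : Γ => ℝ) ⊤) γ ∧ (f : lp (fun _ : Γ => ℝ) ⊤) γ ≤ 1) ∧
      Function.support (⇑(f : lp (fun _ : Γ => ℝ) ⊤)) ⊆ T} := by
    intro T
    have heq : {f : ↥(linftyC Γ) |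
        (∀ γ : Γ, 0 ≤ (f : lp (fun _ : Γ => ℝ) ⊤) γ ∧ (f : lp (fun _ : Γ => ℝ) ⊤) γ ≤ 1) ∧
        Function.support (⇑(f : lp (fun _ : Γ => ℝ) ⊤)) ⊆ T}
        = ⋂ γ : Γ, (fun f : ↥(linftyC Γ) => (f : lp (fun _ : Γ => ℝ) ⊤) γ) ⁻¹'
            (if γ ∈ T then Set.Icc (0 : ℝ) 1 else {0}) := by
      ext f
      simp only [Set.mem_setOf_eq, Set.mem_iInter, Set.mem_preimage]
      constructor
      · rintro ⟨h1, h2⟩ γ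
        by_cases hγ : γ ∈ T
        · simp only [if_pos hγ, Set.mem_Icc]
          exact h1 γ
        · simp only [if_neg hγ, Set.mem_singleton_iff]
          by_contra h
          exact hγ (h2 (Function.mem_support.2 h))
      · intro h
        constructor
        · intro γ
          have := h γ
          by_cases hγ : γ ∈ T
          · simpa [if_pos hγ, Set.mem_Icc] using this
          · rw [if_neg hγ, Set.mem_singleton_iff] at this
            rw [this]; norm_num
        · intro γ hγs
          by_contra hγT
          have := h γ
          rw [if_neg hγT, Set.mem_singleton_iff] at this
          exact Function.mem_support.1 hγs this
    rw [heq]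
    exact isClosed_iInter fun γ => IsClosed.preimage (hev γ)
      (by split_ifs; exacts [isClosed_Icc, isClosed_singleton])
  have hclosedS : IsClosed S := by
    have e0 : (if (0 : Fin 2) = 0 then Γ₁ else Γ₂) = Γ₁ := if_pos rfl
    have e1 : (if (1 : Fin 2) = 0 then Γ₁ else Γ₂) = Γ₂ := if_neg (by decide)
    have hA0 : IsClosed (A 0) := by
      rw [hA 0, e0]
      exact hclosed0 Γ₁
    have hA1 : IsClosed (A 1) := by
      rw [hA 1, e1]
      exact hclosed0 Γ₂
    exact hA0.union hA1.neg
  -- Jung constant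
  have hJ : Jung ↥(linftyC Γ) = 2 := by
    have h2mem : (2 : ℝ) ∈ {c : ℝ | ∃ B : Set ↥(linftyC Γ), IsClosed B ∧ Bornology.IsBounded B ∧
        0 < Metric.diam B ∧ c = 2 * radius B / Metric.diam B} := by
      refine ⟨S, hclosedS, hbdd, ?_, ?_⟩
      · rw [hdiam]; norm_num
      · rw [hdiam, hrad]; norm_num
    have hub : ∀ c ∈ {c : ℝ | ∃ B : Set ↥(linftyC Γ), IsClosed B ∧ Bornology.IsBounded B ∧
        0 < Metric.diam B ∧ c = 2 * radius B / Metric.diam B}, c ≤ 2 := by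
      rintro c ⟨B, _, hbd, hd, rfl⟩
      have hne : B.Nonempty := by
        rw [Set.nonempty_iff_ne_empty]
        rintro rfl
        simp [Metric.diam_empty] at hd
      have hrd := radius_le_diam hbd hne
      rw [div_le_iff₀ hd]
      linarith
    exact le_antisymm (csSup_le ⟨2, h2mem⟩ hub) (le_csSup ⟨2, hub⟩ h2mem)
  exact ⟨hdiam, hrad, hJ⟩
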